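/- For every x ∈ int 𝓛^n, the operator (spectral) norm of the matrix Q_x equals ‖x‖₂², and consequently the operator norm of T_x := Q_{x^{1/2}} equals ‖x‖₂. -/

import Mathlib

set_option synthInstance.maxHeartbeats 1000000
set_option maxHeartbeats 1000000

noncomputable section
open scoped BigOperators

namespace SOCP

/-- `E k` is `ℝ^(k+1)`, written as `(x₀; x̄)` with `x̄ ∈ ℝ^k`. -/
abbrev E (k : ℕ) := EuclideanSpace ℝ (Fin (k + 1))

/-- Build an element of `E k` from a plain function. -/
def mk {k : ℕ} (f : Fin (k + 1) → ℝ) : E k := (WithLp.equiv 2 _).symm f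

/-- The Euclidean norm `‖x̄‖` of the tail of `x`. -/
def tnorm {k : ℕ} (x : E k) : ℝ := Real.sqrt (∑ i : Fin k, (x i.succ) ^ 2)

/-- First Jordan eigenvalue `λ₁(x) = x₀ + ‖x̄‖`. -/
def lam1 {k : ℕ} (x : E k) : ℝ := x 0 + tnorm x

/-- Second Jordan eigenvalue `λ₂(x) = x₀ − ‖x̄‖`. -/
def lam2 {k : ℕ} (x : E k) : ℝ := x 0 - tnorm x

/-- Jordan product `x ∘ y = (xᵀy; x₀ȳ + y₀x̄)`. -/
def jmul {k : ℕ} (x y : E k) : E k :=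
  mk (fun j => if j = 0 then ∑ i, x i * y i else x 0 * y j + y 0 * x j)

/-- The Jordan identity `e = (1; 0)`. -/
def idE {k : ℕ} : E k := mk (fun j => if j = 0 then 1 else 0)

/-- First Jordan frame vector `c₁(x) = ½(1; x̄/‖x̄‖)`. -/
def c1 {k : ℕ} (x : E k) : E k :=
  mk (fun j => if j = 0 then 1 / 2 else x j / (2 * tnorm x))

/-- Second Jordan frame vector `c₂(x) = ½(1; −x̄/‖x̄‖)`. -/
def c2 {k : ℕ} (x : E k) : E k :=
  mk (fun j => if j = 0 then 1 / 2 else -x j / (2 * tnorm x))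

/-- Arrowhead matrix `Arw(x) = [[x₀, x̄ᵀ], [x̄, x₀ I]]`. -/
def Arw {k : ℕ} (x : E k) : Matrix (Fin (k + 1)) (Fin (k + 1)) ℝ :=
  Matrix.of fun i j =>
    if i = 0 then x j else if j = 0 then x i else if i = j then x 0 else 0

/-- Quadratic representation `Q_x = 2 Arw(x)² − Arw(x ∘ x)`. -/
def Qmat {k : ℕ} (x : E k) : Matrix (Fin (k + 1)) (Fin (k + 1)) ℝ :=
  (2 : ℝ) • (Arw x * Arw x) - Arw (jmul x x)

/-- Jordan square root `x^{1/2} = √λ₁ c₁ + √λ₂ c₂` (equal to `(√x₀; 0)` when `x̄ = 0`). -/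
def jsqrt {k : ℕ} (x : E k) : E k :=
  if tnorm x = 0 then mk (fun j => if j = 0 then Real.sqrt (x 0) else 0)
  else Real.sqrt (lam1 x) • c1 x + Real.sqrt (lam2 x) • c2 x

/-- `T_x := Q_{x^{1/2}}`. -/
def Tmat {k : ℕ} (x : E k) : Matrix (Fin (k + 1)) (Fin (k + 1)) ℝ := Qmat (jsqrt x)

/-- Jordan inverse `x⁻¹ = λ₁⁻¹ c₁ + λ₂⁻¹ c₂` (equal to `(x₀⁻¹; 0)` when `x̄ = 0`). -/
def jinv {k : ℕ} (x : E k) : E k :=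
  if tnorm x = 0 then mk (fun j => if j = 0 then (x 0)⁻¹ else 0)
  else (lam1 x)⁻¹ • c1 x + (lam2 x)⁻¹ • c2 x

/-- Matrix-vector product, as a map on `E k`. -/
def mulVecE {k : ℕ} (M : Matrix (Fin (k + 1)) (Fin (k + 1)) ℝ) (v : E k) : E k :=
  mk (M.mulVec (WithLp.equiv 2 _ v))

/-- Block vectors `x = (x₁; …; x_r)` with `x_i ∈ ℝ^{d i + 2}` (so each block has dim ≥ 2). -/
abbrev BV {r : ℕ} (d : Fin r → ℕ) : Type := (i : Fin r) → E (d i + 1)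

variable {r : ℕ} {d : Fin r → ℕ}

/-- Spectral norm `‖x‖₂ = max_i (|x_{i,0}| + ‖x̄_i‖)`. -/
def specNorm (x : BV d) : ℝ := ⨆ i, (|x i 0| + tnorm (x i))

/-- Frobenius norm `‖x‖_F = √(Σ_i (λ₁(x_i)² + λ₂(x_i)²))`. -/
def frobNorm (x : BV d) : ℝ := Real.sqrt (∑ i, (lam1 (x i) ^ 2 + lam2 (x i) ^ 2))

/-- Minimum Jordan eigenvalue `λ_min(x) = min_i λ₂(x_i)`. -/
def lamMin (x : BV d) : ℝ := ⨅ i, lam2 (x i)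

/-- Blockwise Jordan product. -/
def jmulB (x y : BV d) : BV d := fun i => jmul (x i) (y i)

/-- Block identity element. -/
def idB : BV d := fun _ => idE

/-- Membership in the interior of the product of Lorentz cones: `‖x̄_i‖ < x_{i,0}` for all `i`. -/
def inIntLB (x : BV d) : Prop := ∀ i, tnorm (x i) < x i 0

/-- Euclidean inner product of the concatenated vectors. -/
def ip (x y : BV d) : ℝ := ∑ i, ∑ j, x i j * y i j

/-- Block-diagonal application of `T_x`: `(T_x s)_i = T_{x_i} s_i`. -/
def TB (x s : BV d) : BV d := fun i => mulVecE (Tmat (x i)) (s i)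

/-- Distance from the central path `d(x, s, ν) = ‖T_x s − ν e‖_F`. -/
def cdist (x s : BV d) (ν : ℝ) : ℝ := frobNorm (TB x s - ν • (idB : BV d))

/-- Blockwise Jordan inverse. -/
def jinvB (x : BV d) : BV d := fun i => jinv (x i)


/-- Operator (spectral) norm of a matrix, w.r.t. the Euclidean norms. -/
def opNorm {k : ℕ} (M : Matrix (Fin (k + 1)) (Fin (k + 1)) ℝ) : ℝ :=
  ‖LinearMap.toContinuousLinearMap (Matrix.toEuclideanLin M)‖

section Aux
variable {k : ℕ}

lemma mk_apply (f : Fin (k+1) → ℝ) (j : Fin (k+1)) : mk f j = f j := rfl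

lemma tnorm_nonneg (x : E k) : 0 ≤ tnorm x := Real.sqrt_nonneg _

lemma tnorm_sq (x : E k) : tnorm x ^ 2 = ∑ i : Fin k, x i.succ ^ 2 :=
  Real.sq_sqrt (by positivity)

lemma norm_sq_eq (v : E k) : ‖v‖ ^ 2 = (v 0) ^ 2 + tnorm v ^ 2 := by
  rw [EuclideanSpace.norm_eq, Real.sq_sqrt (by positivity), tnorm_sq, Fin.sum_univ_succ]
  simp [Real.norm_eq_abs, sq_abs]

lemma arw_mulVec (y : E k) (w : Fin (k+1) → ℝ) :
    (Arw y).mulVec w = fun j => if j = 0 then ∑ i, y i * w i else y 0 * w j + w 0 * y j := by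
  funext j
  rcases Fin.eq_zero_or_eq_succ j with hj | ⟨m, rfl⟩
  · subst hj
    simp [Matrix.mulVec, dotProduct, Arw]
  · have hm : (m.succ : Fin (k+1)) ≠ 0 := Fin.succ_ne_zero m
    simp only [Matrix.mulVec, dotProduct, hm, if_neg hm, if_false]
    rw [Fin.sum_univ_succ]
    simp only [Arw, Matrix.of_apply, if_neg hm]
    rw [Finset.sum_eq_single m]
    · simp [hm]; ring
    · intro b _ hb
      have : (m.succ : Fin (k+1)) ≠ b.succ := by
        simpa [Fin.succ_inj] using (Ne.symm hb)
      simp [this, Fin.succ_ne_zero]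
    · simp
end Aux
section Aux2
variable {k : ℕ}

lemma Qmat_mulVec (x : E k) (w : Fin (k+1) → ℝ) :
    (Qmat x).mulVec w = fun j =>
      2 * (∑ i, x i * w i) * x j + ((x 0)^2 - tnorm x ^ 2) * (if j = 0 then -(w 0) else w j) := by
  have hs2 : ∑ i : Fin k, x i.succ ^ 2 = tnorm x ^ 2 := (tnorm_sq x).symm
  have e3 : ∑ i : Fin k, x i.succ * x i.succ = tnorm x ^ 2 := by
    rw [← hs2]; exact Finset.sum_congr rfl fun i _ => (sq (x i.succ)).symm
  have e1 : ∑ i : Fin k, x i.succ * (x 0 * w i.succ + w 0 * x i.succ)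
      = x 0 * (∑ i : Fin k, x i.succ * w i.succ) + w 0 * tnorm x ^ 2 := by
    rw [← hs2, Finset.mul_sum, Finset.mul_sum, ← Finset.sum_add_distrib]
    exact Finset.sum_congr rfl fun i _ => by ring
  have e2 : ∑ i : Fin k, (x 0 * x i.succ + x 0 * x i.succ) * w i.succ
      = 2 * x 0 * (∑ i : Fin k, x i.succ * w i.succ) := by
    rw [Finset.mul_sum]; exact Finset.sum_congr rfl fun i _ => by ring
  have hmv : (Qmat x).mulVec w
      = fun j => 2 * ((Arw x).mulVec ((Arw x).mulVec w) j) - (Arw (jmul x x)).mulVec w j := by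
    funext j
    simp [Qmat, Matrix.sub_mulVec, Matrix.smul_mulVec, ← Matrix.mulVec_mulVec,
      Pi.smul_apply, Pi.sub_apply, smul_eq_mul]
  rw [hmv]
  simp only [arw_mulVec, jmul, mk_apply]
  funext j
  rcases Fin.eq_zero_or_eq_succ j with hj | ⟨m, rfl⟩
  · subst hj
    simp only [if_pos rfl, if_true, Fin.sum_univ_succ, Fin.succ_ne_zero, if_false, ite_true,
      ite_false]
    rw [e1, e2, e3]
    ring
  · have hm : (m.succ : Fin (k+1)) ≠ 0 := Fin.succ_ne_zero m
    simp only [if_neg hm, if_true, Fin.sum_univ_succ, Fin.succ_ne_zero, if_false, ite_true,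
      ite_false, if_pos rfl]
    rw [e3]
    ring

end Aux2
section Aux3

lemma key_ineq (a s w0 t m2 : ℝ) (hs : 0 ≤ s) (hsa : s ≤ a) (hm2 : 0 ≤ m2)
    (ht : t^2 ≤ s^2 * m2) :
    (2*a*(a*w0+t) - (a^2 - s^2)*w0)^2
      + (4*(a*w0+t)^2*s^2 + 4*(a*w0+t)*(a^2-s^2)*t + (a^2-s^2)^2*m2)
      ≤ (a+s)^4 * (w0^2 + m2) := by
  have ha : (0:ℝ) ≤ a := le_trans hs hsa
  set m := Real.sqrt m2 with hmdef
  have hm : m^2 = m2 := Real.sq_sqrt hm2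
  have hm0 : 0 ≤ m := Real.sqrt_nonneg _
  have habs : t^2 ≤ (s*m)^2 := by nlinarith
  have h2 : |t| ≤ s * m := by
    have h := Real.sqrt_le_sqrt habs
    rwa [Real.sqrt_sq_eq_abs, Real.sqrt_sq (by positivity)] at h
  have h3 : w0 * t ≤ |w0| * (s*m) :=
    le_trans (le_abs_self _) (by rw [abs_mul]; exact mul_le_mul_of_nonneg_left h2 (abs_nonneg w0))
  have h4 : 2 * (|w0| * (s*m)) ≤ s*(w0^2 + m^2) := by
    nlinarith [mul_nonneg hs (sq_nonneg (|w0| - m)), sq_abs w0, abs_nonneg w0]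
  have t1 : 0 ≤ s*w0^2 + s*m2 - 2*(w0*t) := by nlinarith
  have hinner : 0 ≤ (a^2+s^2)*(s*w0^2 + s*m2 - 2*(w0*t)) + 2*a*(s^2*m2 - t^2) :=
    add_nonneg (mul_nonneg (by positivity) t1)
      (mul_nonneg (by linarith) (by linarith))
  nlinarith [mul_nonneg ha hinner]

end Aux3
section Aux4
variable {k : ℕ}

lemma norm_sq_eq' (v : E k) : ‖v‖ ^ 2 = (v 0) ^ 2 + ∑ i : Fin k, (v i.succ) ^ 2 := by
  rw [norm_sq_eq, tnorm_sq]

lemma toEuc_apply (M : Matrix (Fin (k+1)) (Fin (k+1)) ℝ) (v : E k) (j : Fin (k+1)) :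
    (LinearMap.toContinuousLinearMap (Matrix.toEuclideanLin M)) v j
      = M.mulVec (fun i => v i) j := rfl

lemma Qmat_apply_sq (x : E k) (v : E k) :
    ‖(LinearMap.toContinuousLinearMap (Matrix.toEuclideanLin (Qmat x))) v‖ ^ 2
      = (2*(∑ i, x i * v i)*(x 0) - ((x 0)^2 - tnorm x ^2)*(v 0))^2
        + (4*(∑ i, x i * v i)^2*(tnorm x)^2
           + 4*(∑ i, x i * v i)*((x 0)^2 - tnorm x ^2)*(∑ i : Fin k, x i.succ * v i.succ)
           + ((x 0)^2 - tnorm x ^2)^2*(∑ i : Fin k, (v i.succ)^2)) := by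
  have happ : ∀ j, (LinearMap.toContinuousLinearMap (Matrix.toEuclideanLin (Qmat x))) v j
      = 2 * (∑ i, x i * v i) * x j
        + ((x 0)^2 - tnorm x ^ 2) * (if j = 0 then -(v 0) else v j) := by
    intro j
    rw [toEuc_apply, Qmat_mulVec]
  rw [norm_sq_eq']
  simp only [happ, if_pos rfl, Fin.succ_ne_zero, if_neg (Fin.succ_ne_zero _), ite_true,
    ite_false, if_true, if_false]
  have hsum : ∑ i : Fin k,
      (2 * (∑ i, x i * v i) * x i.succ + ((x 0)^2 - tnorm x ^ 2) * v i.succ)^2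
      = 4*(∑ i, x i * v i)^2*(∑ i : Fin k, (x i.succ)^2)
        + 4*(∑ i, x i * v i)*((x 0)^2 - tnorm x ^2)*(∑ i : Fin k, x i.succ * v i.succ)
        + ((x 0)^2 - tnorm x ^2)^2*(∑ i : Fin k, (v i.succ)^2) := by
    rw [show ∑ i : Fin k,
        (2 * (∑ i, x i * v i) * x i.succ + ((x 0)^2 - tnorm x ^ 2) * v i.succ)^2
      = ∑ i : Fin k, (4*(∑ i, x i * v i)^2*(x i.succ)^2
          + 4*(∑ i, x i * v i)*((x 0)^2 - tnorm x ^2)*(x i.succ * v i.succ)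
          + ((x 0)^2 - tnorm x ^2)^2*((v i.succ)^2))
      from Finset.sum_congr rfl fun i _ => by ring]
    rw [Finset.sum_add_distrib, Finset.sum_add_distrib, ← Finset.mul_sum, ← Finset.mul_sum,
      ← Finset.mul_sum]
  rw [hsum, tnorm_sq]
  ring

lemma Qmat_opNorm_le_aux (x : E k) (hle : tnorm x ≤ x 0) (v : E k) :
    ‖(LinearMap.toContinuousLinearMap (Matrix.toEuclideanLin (Qmat x))) v‖
      ≤ (x 0 + tnorm x)^2 * ‖v‖ := by
  have hs0 : 0 ≤ tnorm x := tnorm_nonneg x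
  have hsq : ‖(LinearMap.toContinuousLinearMap (Matrix.toEuclideanLin (Qmat x))) v‖ ^ 2
      ≤ ((x 0 + tnorm x)^2 * ‖v‖) ^ 2 := by
    rw [Qmat_apply_sq]
    have hp : (∑ i, x i * v i) = x 0 * v 0 + ∑ i : Fin k, x i.succ * v i.succ :=
      Fin.sum_univ_succ _
    have ht : (∑ i : Fin k, x i.succ * v i.succ)^2
        ≤ (tnorm x)^2 * (∑ i : Fin k, (v i.succ)^2) := by
      rw [tnorm_sq]
      exact Finset.sum_mul_sq_le_sq_mul_sq _ _ _
    have hm2 : (0:ℝ) ≤ ∑ i : Fin k, (v i.succ)^2 := by positivity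
    have hrhs : ((x 0 + tnorm x)^2 * ‖v‖) ^ 2
        = (x 0 + tnorm x)^4 * ((v 0)^2 + ∑ i : Fin k, (v i.succ)^2) := by
      rw [mul_pow, norm_sq_eq']; ring
    rw [hrhs, hp]
    have := key_ineq (x 0) (tnorm x) (v 0) (∑ i : Fin k, x i.succ * v i.succ)
      (∑ i : Fin k, (v i.succ)^2) hs0 hle hm2 ht
    linarith [this]
  have h1 : (0:ℝ) ≤ (x 0 + tnorm x)^2 * ‖v‖ := by positivity
  nlinarith [norm_nonneg ((LinearMap.toContinuousLinearMap (Matrix.toEuclideanLin (Qmat x))) v), hsq, h1]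

end Aux4
section Aux5
variable {k : ℕ}

lemma tail_zero (x : E k) (h : tnorm x = 0) (i : Fin k) : x i.succ = 0 := by
  have h2 : ∑ i : Fin k, x i.succ ^ 2 = 0 := by rw [← tnorm_sq, h]; norm_num
  have := (Finset.sum_eq_zero_iff_of_nonneg (fun i _ => sq_nonneg (x i.succ))).mp h2 i
    (Finset.mem_univ i)
  exact pow_eq_zero_iff two_ne_zero |>.mp this

lemma le_opNorm_of_eig (M : Matrix (Fin (k+1)) (Fin (k+1)) ℝ) (C : ℝ) (hC : 0 ≤ C)
    (u : E k) (hu : u ≠ 0)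
    (heig : ∀ j, M.mulVec (fun i => u i) j = C * u j) : C ≤ opNorm M := by
  set f := LinearMap.toContinuousLinearMap (Matrix.toEuclideanLin M) with hf
  have hfu : f u = C • u := by
    ext j
    rw [show f u j = M.mulVec (fun i => u i) j from rfl, heig j]
    rfl
  have hn : ‖f u‖ = C * ‖u‖ := by rw [hfu, norm_smul, Real.norm_of_nonneg hC]
  have hle := f.le_opNorm u
  rw [hn] at hle
  have hupos : 0 < ‖u‖ := norm_pos_iff.mpr hu
  exact le_of_mul_le_mul_right hle hupos

lemma opNorm_Qmat (x : E k) (hle : tnorm x ≤ x 0) :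
    opNorm (Qmat x) = (x 0 + tnorm x)^2 := by
  have hs0 := tnorm_nonneg x
  have hC : (0:ℝ) ≤ (x 0 + tnorm x)^2 := sq_nonneg _
  apply le_antisymm
  · exact (LinearMap.toContinuousLinearMap (Matrix.toEuclideanLin (Qmat x))).opNorm_le_bound hC
      (Qmat_opNorm_le_aux x hle)
  · by_cases hs : tnorm x = 0
    · -- eigenvector (1;0)
      refine le_opNorm_of_eig _ _ hC (mk fun j => if j = 0 then 1 else 0) ?_ ?_
      · intro h
        have : (mk fun j : Fin (k+1) => if j = 0 then (1:ℝ) else 0) 0 = 0 := by rw [h]; rfl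
        simp [mk_apply] at this
      · intro j
        rw [show (fun i => (mk fun j : Fin (k+1) => if j = 0 then (1:ℝ) else 0) i)
            = (fun i : Fin (k+1) => if i = 0 then (1:ℝ) else 0) from rfl, Qmat_mulVec]
        have hp : (∑ i, x i * if i = 0 then (1:ℝ) else 0) = x 0 := by
          rw [Fin.sum_univ_succ]
          simp [Fin.succ_ne_zero]
        rw [hp]
        rcases Fin.eq_zero_or_eq_succ j with hj | ⟨m, rfl⟩
        · subst hj; simp [mk_apply, hs]; ring
        · simp [mk_apply, Fin.succ_ne_zero, tail_zero x hs m]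
    · -- eigenvector (tnorm x ; x̄)
      refine le_opNorm_of_eig _ _ hC (mk fun j => if j = 0 then tnorm x else x j) ?_ ?_
      · intro h
        have : (mk fun j : Fin (k+1) => if j = 0 then tnorm x else x j) 0 = 0 := by rw [h]; rfl
        simp only [mk_apply, if_pos rfl] at this
        exact hs this
      · intro j
        rw [show (fun i => (mk fun j : Fin (k+1) => if j = 0 then tnorm x else x j) i)
            = (fun i : Fin (k+1) => if i = 0 then tnorm x else x i) from rfl, Qmat_mulVec]
        have hp : (∑ i, x i * if i = 0 then tnorm x else x i)
            = x 0 * tnorm x + tnorm x ^ 2 := by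
          rw [Fin.sum_univ_succ]
          simp only [if_pos rfl, Fin.succ_ne_zero, if_neg (Fin.succ_ne_zero _), ite_true,
            ite_false, if_true, if_false]
          rw [show ∑ i : Fin k, x i.succ * x i.succ = tnorm x ^2 by
            rw [tnorm_sq]; exact Finset.sum_congr rfl fun i _ => (sq (x i.succ)).symm]
        rw [hp]
        rcases Fin.eq_zero_or_eq_succ j with hj | ⟨m, rfl⟩
        · subst hj; simp only [mk_apply, if_pos rfl, ite_true, if_true]; ring
        · simp only [mk_apply, if_neg (Fin.succ_ne_zero _), ite_false, if_false]; ring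

end Aux5
section Aux6
variable {k : ℕ}

lemma jsqrt_facts (x : E k) (hx : tnorm x < x 0) :
    tnorm (jsqrt x) ≤ jsqrt x 0 ∧
      (jsqrt x 0 + tnorm (jsqrt x))^2 = x 0 + tnorm x := by
  have hs0 := tnorm_nonneg x
  have ha : 0 < x 0 := lt_of_le_of_lt hs0 hx
  have hl2 : 0 ≤ lam2 x := by simp only [lam2]; linarith
  have hl1 : 0 ≤ lam1 x := by simp only [lam1]; linarith
  have hl21 : lam2 x ≤ lam1 x := by simp only [lam1, lam2]; linarith
  have hrs : Real.sqrt (lam2 x) ≤ Real.sqrt (lam1 x) := Real.sqrt_le_sqrt hl21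
  by_cases hs : tnorm x = 0
  · have hy : jsqrt x = mk (fun j => if j = 0 then Real.sqrt (x 0) else 0) := by
      rw [jsqrt, if_pos hs]
    have hy0 : jsqrt x 0 = Real.sqrt (x 0) := by rw [hy]; rfl
    have htn : tnorm (jsqrt x) = 0 := by
      rw [tnorm]
      have : ∀ i : Fin k, jsqrt x i.succ = 0 := by
        intro i; rw [hy, mk_apply, if_neg (Fin.succ_ne_zero _)]
      simp [this]
    rw [htn, hy0, hs]
    refine ⟨Real.sqrt_nonneg _, ?_⟩
    rw [add_zero, add_zero, Real.sq_sqrt ha.le]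
  · have hspos : 0 < tnorm x := lt_of_le_of_ne hs0 (Ne.symm hs)
    have hy0 : jsqrt x 0 = (Real.sqrt (lam1 x) + Real.sqrt (lam2 x))/2 := by
      rw [jsqrt, if_neg hs]
      simp only [PiLp.add_apply, PiLp.smul_apply, smul_eq_mul, c1, c2, mk_apply, if_pos rfl,
        ite_true, if_true]
      ring
    have hyt : ∀ i : Fin k, jsqrt x i.succ
        = ((Real.sqrt (lam1 x) - Real.sqrt (lam2 x))/(2*tnorm x)) * x i.succ := by
      intro i
      rw [jsqrt, if_neg hs]
      simp only [PiLp.add_apply, PiLp.smul_apply, smul_eq_mul, c1, c2, mk_apply,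
        if_neg (Fin.succ_ne_zero _), ite_false, if_false]
      ring
    have hc0 : 0 ≤ (Real.sqrt (lam1 x) - Real.sqrt (lam2 x))/(2*tnorm x) := by
      apply div_nonneg (by linarith) (by linarith)
    have htn : tnorm (jsqrt x) = (Real.sqrt (lam1 x) - Real.sqrt (lam2 x))/2 := by
      rw [tnorm]
      have hsum : ∑ i : Fin k, (jsqrt x i.succ)^2
          = (((Real.sqrt (lam1 x) - Real.sqrt (lam2 x))/(2*tnorm x)) * tnorm x)^2 := by
        calc ∑ i : Fin k, (jsqrt x i.succ)^2
            = ∑ i : Fin k, ((Real.sqrt (lam1 x) - Real.sqrt (lam2 x))/(2*tnorm x))^2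
                * (x i.succ)^2 :=
              Finset.sum_congr rfl fun i _ => by rw [hyt i]; ring
          _ = ((Real.sqrt (lam1 x) - Real.sqrt (lam2 x))/(2*tnorm x))^2 * tnorm x ^ 2 := by
              rw [← Finset.mul_sum, ← tnorm_sq]
          _ = _ := by ring
      rw [hsum, Real.sqrt_sq (mul_nonneg hc0 hs0)]
      field_simp
    constructor
    · rw [htn, hy0]
      have := Real.sqrt_nonneg (lam2 x)
      linarith
    · rw [htn, hy0]
      have heq : (Real.sqrt (lam1 x) + Real.sqrt (lam2 x))/2
          + (Real.sqrt (lam1 x) - Real.sqrt (lam2 x))/2 = Real.sqrt (lam1 x) := by ring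
      rw [heq, Real.sq_sqrt hl1, lam1]

end Aux6
/-- For `x ∈ int 𝓛^n`, `‖Q_x‖ = ‖x‖₂²` and `‖T_x‖ = ‖x‖₂`,
where `‖x‖₂ = |x₀| + ‖x̄‖`. -/
theorem opNorm_Qmat_Tmat {k : ℕ} (x : E k) (hx : tnorm x < x 0) :
    opNorm (Qmat x) = (|x 0| + tnorm x) ^ 2 ∧ opNorm (Tmat x) = |x 0| + tnorm x := by
  have ha : 0 < x 0 := lt_of_le_of_lt (tnorm_nonneg x) hx
  rw [abs_of_pos ha]
  obtain ⟨h1, h2⟩ := jsqrt_facts x hx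
  exact ⟨opNorm_Qmat x hx.le, by rw [Tmat, opNorm_Qmat (jsqrt x) h1, h2]⟩

end SOCP
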